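/- Assume S² = id on H. Then the map T : A^e ◇ H → A^e ◇ H, T((a⊗b)⊗h) = (b⊗a)⊗S(h), is an algebra anti-homomorphism satisfying T² = id. -/

import Mathlib

open scoped TensorProduct
open Finset

noncomputable section AuxConv

open Coalgebra TensorProduct LinearMap

variable {R : Type} [CommRing R]
variable {C : Type} [AddCommGroup C] [Module R C] [Coalgebra R C]
variable {B : Type} [Ring B] [Algebra R B]

/-- Convolution product on `Hom(C, B)`. -/
def myconv (f g : C →ₗ[R] B) : C →ₗ[R] B :=
  LinearMap.mul' R B ∘ₗ TensorProduct.map f g ∘ₗ Coalgebra.comul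

/-- Convolution unit. -/
def myunit : C →ₗ[R] B := Algebra.linearMap R B ∘ₗ Coalgebra.counit

lemma myunit_apply (c : C) : (myunit (R := R) (B := B) c) = algebraMap R B (Coalgebra.counit c) := rfl

lemma myconv_repr {ι : Type*} (f g : C →ₗ[R] B) (c : C) (r : Coalgebra.Repr R c ι) :
    myconv f g c = ∑ i ∈ r.index, f (r.left i) * g (r.right i) := by
  simp only [myconv, LinearMap.comp_apply, ← r.eq, map_sum, TensorProduct.map_tmul,
    LinearMap.mul'_apply]

lemma sum_counit_smul {ι : Type*} (c : C) (r : Coalgebra.Repr R c ι) :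
    ∑ i ∈ r.index, Coalgebra.counit (R := R) (r.left i) • r.right i = c := by
  calc ∑ i ∈ r.index, Coalgebra.counit (R := R) (r.left i) • r.right i
      = TensorProduct.lid R C (∑ i ∈ r.index,
          Coalgebra.counit (R := R) (r.left i) ⊗ₜ[R] r.right i) := by
        rw [map_sum]; simp [TensorProduct.lid_tmul]
    _ = TensorProduct.lid R C (1 ⊗ₜ[R] c) := by rw [Coalgebra.sum_counit_tmul_eq r]
    _ = c := by simp

lemma sum_smul_counit {ι : Type*} (c : C) (r : Coalgebra.Repr R c ι) :
    ∑ i ∈ r.index, Coalgebra.counit (R := R) (r.right i) • r.left i = c := by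
  calc ∑ i ∈ r.index, Coalgebra.counit (R := R) (r.right i) • r.left i
      = TensorProduct.rid R C (∑ i ∈ r.index,
          r.left i ⊗ₜ[R] Coalgebra.counit (R := R) (r.right i)) := by
        rw [map_sum]; simp [TensorProduct.rid_tmul]
    _ = TensorProduct.rid R C (c ⊗ₜ[R] 1) := by rw [Coalgebra.sum_tmul_counit_eq r]
    _ = c := by simp

lemma myconv_myunit (f : C →ₗ[R] B) : myconv f myunit = f := by
  ext c
  rw [myconv_repr f (myunit : C →ₗ[R] B) c (Coalgebra.Repr.arbitrary R c)]
  have : ∀ i, f ((Coalgebra.Repr.arbitrary R c).left i) *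
      (myunit : C →ₗ[R] B) ((Coalgebra.Repr.arbitrary R c).right i) =
      f (Coalgebra.counit (R := R) ((Coalgebra.Repr.arbitrary R c).right i) •
        (Coalgebra.Repr.arbitrary R c).left i) := by
    intro i
    rw [map_smul, myunit_apply, Algebra.algebraMap_eq_smul_one, mul_smul_comm, mul_one]
  simp_rw [this, ← map_sum, sum_smul_counit]

lemma myunit_myconv (f : C →ₗ[R] B) : myconv myunit f = f := by
  ext c
  rw [myconv_repr (myunit : C →ₗ[R] B) f c (Coalgebra.Repr.arbitrary R c)]
  have : ∀ i, (myunit : C →ₗ[R] B) ((Coalgebra.Repr.arbitrary R c).left i) *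
      f ((Coalgebra.Repr.arbitrary R c).right i) =
      f (Coalgebra.counit (R := R) ((Coalgebra.Repr.arbitrary R c).left i) •
        (Coalgebra.Repr.arbitrary R c).right i) := by
    intro i
    rw [map_smul, myunit_apply, Algebra.algebraMap_eq_smul_one, smul_mul_assoc, one_mul]
  simp_rw [this, ← map_sum, _root_.sum_counit_smul]

lemma myconv_assoc (f g h : C →ₗ[R] B) :
    myconv (myconv f g) h = myconv f (myconv g h) := by
  ext c
  set r := Coalgebra.Repr.arbitrary R c with hr
  set p := fun i => Coalgebra.Repr.arbitrary R (r.left i) with hp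
  set q := fun i => Coalgebra.Repr.arbitrary R (r.right i) with hq
  rw [myconv_repr _ h c r, myconv_repr f _ c r]
  have key := Coalgebra.sum_map_tmul_tmul_eq (R := R) f g h c (repr := r) (a₁ := p) (a₂ := q)
  apply_fun (LinearMap.mul' R B ∘ₗ LinearMap.lTensor B (LinearMap.mul' R B)) at key
  simp only [map_sum, LinearMap.comp_apply, LinearMap.lTensor_tmul, LinearMap.mul'_apply] at key
  calc ∑ i ∈ r.index, myconv f g (r.left i) * h (r.right i)
      = ∑ i ∈ r.index, ∑ j ∈ (p i).index,
          f ((p i).left j) * (g ((p i).right j) * h (r.right i)) := by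
        refine Finset.sum_congr rfl fun i _ => ?_
        rw [myconv_repr f g _ (p i), Finset.sum_mul]
        simp [mul_assoc]
    _ = ∑ i ∈ r.index, ∑ j ∈ (q i).index,
          f (r.left i) * (g ((q i).left j) * h ((q i).right j)) := key.symm
    _ = ∑ i ∈ r.index, f (r.left i) * myconv g h (r.right i) := by
        refine Finset.sum_congr rfl fun i _ => ?_
        rw [myconv_repr g h _ (q i), Finset.mul_sum]

lemma myconv_inv_unique {f g n : C →ₗ[R] B} (h1 : myconv f g = myunit)
    (h2 : myconv g n = myunit) : f = n := by
  have : myconv f (myconv g n) = myconv (myconv f g) n := (myconv_assoc f g n).symm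
  rw [h1, h2, myconv_myunit, myunit_myconv] at this
  exact this

end AuxConv

section Hopf
open Coalgebra TensorProduct LinearMap HopfAlgebra

variable {R : Type} [CommRing R] {H : Type} [Ring H] [HopfAlgebra R H]

lemma my_antipode_one : antipode (R := R) (1 : H) = 1 := by
  have h := mul_antipode_rTensor_comul_apply (R := R) (A := H) 1
  simpa [Bialgebra.comul_one, Algebra.TensorProduct.one_def] using h

lemma comul_tmul' (a b : H) :
    Coalgebra.comul (R := R) (a ⊗ₜ[R] b) =
      TensorProduct.tensorTensorTensorComm R H H H H
        (Coalgebra.comul (R := R) a ⊗ₜ[R] Coalgebra.comul (R := R) b) := by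
  rfl

lemma counit_tmul' (a b : H) :
    Coalgebra.counit (R := R) (a ⊗ₜ[R] b) =
      Coalgebra.counit (R := R) a * Coalgebra.counit (R := R) b := by
  rw [mul_comm]; rfl

lemma mulmul (u v : H ⊗[R] H) :
    TensorProduct.map (LinearMap.mul' R H) (LinearMap.mul' R H)
      (TensorProduct.tensorTensorTensorComm R H H H H (u ⊗ₜ[R] v)) = u * v := by
  induction u with
  | zero => simp
  | tmul a b =>
    induction v with
    | zero => simp
    | tmul c d => simp [Algebra.TensorProduct.tmul_mul_tmul]
    | add v₁ v₂ h1 h2 => simp only [tmul_add, map_add, h1, h2, mul_add]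
  | add u₁ u₂ h1 h2 => simp only [add_tmul, map_add, h1, h2, add_mul]

lemma my_antipode_mul (a b : H) :
    antipode (R := R) (a * b) = antipode (R := R) b * antipode (R := R) a := by
  set S : H →ₗ[R] H := antipode (R := R) with hS
  set μ : H ⊗[R] H →ₗ[R] H := LinearMap.mul' R H with hμ
  set n : H ⊗[R] H →ₗ[R] H :=
    μ ∘ₗ TensorProduct.map S S ∘ₗ (TensorProduct.comm R H H).toLinearMap with hn
  have h1 : myconv (S ∘ₗ μ) μ = (myunit : H ⊗[R] H →ₗ[R] H) := by
    apply TensorProduct.ext'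
    intro a b
    have hmap : TensorProduct.map (S ∘ₗ μ) μ =
        (TensorProduct.map S LinearMap.id) ∘ₗ TensorProduct.map μ μ := by
      rw [← TensorProduct.map_comp, LinearMap.id_comp]
    simp only [myconv, LinearMap.comp_apply, comul_tmul', hmap]
    rw [mulmul, ← Bialgebra.comul_mul]
    have : TensorProduct.map S LinearMap.id = LinearMap.rTensor H S := rfl
    rw [this, mul_antipode_rTensor_comul_apply]
    simp [myunit_apply, counit_tmul', Bialgebra.counit_mul]
    exact Algebra.commutes _ _
  have h2 : myconv μ n = (myunit : H ⊗[R] H →ₗ[R] H) := by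
    apply TensorProduct.ext'
    intro a b
    set ra := Coalgebra.Repr.arbitrary R a with hra
    set rb := Coalgebra.Repr.arbitrary R b with hrb
    have hcm : Coalgebra.comul (R := R) (a ⊗ₜ[R] b) =
        ∑ i ∈ ra.index, ∑ j ∈ rb.index,
          (ra.left i ⊗ₜ[R] rb.left j) ⊗ₜ[R] (ra.right i ⊗ₜ[R] rb.right j) := by
      rw [comul_tmul', ← ra.eq, ← rb.eq, TensorProduct.sum_tmul]
      simp only [TensorProduct.tmul_sum, map_sum, TensorProduct.tensorTensorTensorComm_tmul]
    simp only [myconv, LinearMap.comp_apply, hcm, map_sum, TensorProduct.map_tmul,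
      LinearMap.mul'_apply]
    have hterm : ∀ i j, μ (ra.left i ⊗ₜ[R] rb.left j) * n (ra.right i ⊗ₜ[R] rb.right j)
        = ra.left i * ((rb.left j * S (rb.right j)) * S (ra.right i)) := by
      intro i j
      simp only [hn, hμ, LinearMap.comp_apply, LinearEquiv.coe_coe, TensorProduct.comm_tmul,
        TensorProduct.map_tmul, LinearMap.mul'_apply]
      simp only [mul_assoc]
    simp_rw [hterm]
    have hinner : ∀ i, ∑ j ∈ rb.index,
        ra.left i * ((rb.left j * S (rb.right j)) * S (ra.right i))
        = Coalgebra.counit (R := R) b • (ra.left i * S (ra.right i)) := by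
      intro i
      rw [← Finset.mul_sum, ← Finset.sum_mul]
      rw [hS, sum_mul_antipode_eq_smul rb]
      rw [smul_mul_assoc, one_mul, mul_smul_comm]
    simp_rw [hinner, ← Finset.smul_sum]
    rw [hS, sum_mul_antipode_eq_smul ra]
    rw [myunit_apply, counit_tmul', smul_smul, mul_comm, Algebra.algebraMap_eq_smul_one]
  have key : S ∘ₗ μ = n := myconv_inv_unique h1 h2
  have := congrArg (fun φ : H ⊗[R] H →ₗ[R] H => φ (a ⊗ₜ[R] b)) key
  simpa [hn, hμ] using this


lemma my_comul_antipode (h : H) :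
    Coalgebra.comul (R := R) (antipode (R := R) h) =
      TensorProduct.comm R H H (TensorProduct.map (antipode (R := R)) (antipode (R := R))
        (Coalgebra.comul (R := R) h)) := by
  set S : H →ₗ[R] H := antipode (R := R) with hS
  set μ : H ⊗[R] H →ₗ[R] H := LinearMap.mul' R H with hμ
  set Δ : H →ₗ[R] H ⊗[R] H := Coalgebra.comul (R := R) with hΔ
  set f : H →ₗ[R] H ⊗[R] H :=
    (TensorProduct.comm R H H).toLinearMap ∘ₗ TensorProduct.map S S ∘ₗ Δ with hf
  set n : H →ₗ[R] H ⊗[R] H := Δ ∘ₗ S with hn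
  have h2 : myconv Δ n = (myunit : H →ₗ[R] H ⊗[R] H) := by
    ext c
    set r := Coalgebra.Repr.arbitrary R c with hr
    rw [myconv_repr Δ n c r]
    have hterm : ∀ i, Δ (r.left i) * n (r.right i) = Δ (r.left i * S (r.right i)) := by
      intro i
      simp only [hn, LinearMap.comp_apply, hΔ, Bialgebra.comul_mul]
    simp_rw [hterm, ← map_sum, hS, sum_mul_antipode_eq_smul r, map_smul]
    rw [hΔ, Bialgebra.comul_one, myunit_apply, Algebra.algebraMap_eq_smul_one]
  have h1 : myconv f Δ = (myunit : H →ₗ[R] H ⊗[R] H) := by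
    ext c
    set r := Coalgebra.Repr.arbitrary R c with hr
    set q := fun i => Coalgebra.Repr.arbitrary R (r.right i) with hq
    set v := fun i => fun m => Coalgebra.Repr.arbitrary R ((q i).left m) with hv
    -- the 4-slot linear map W
    set W : H ⊗[R] (H ⊗[R] (H ⊗[R] H)) →ₗ[R] H ⊗[R] H :=
      TensorProduct.map μ μ
        ∘ₗ (TensorProduct.tensorTensorTensorComm R H H H H).toLinearMap
        ∘ₗ TensorProduct.map
            ((TensorProduct.comm R H H).toLinearMap ∘ₗ TensorProduct.map S S) LinearMap.id
        ∘ₗ (TensorProduct.assoc R H H (H ⊗[R] H)).symm.toLinearMap with hW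
    have W_tmul : ∀ (a b x y : H),
        W (a ⊗ₜ[R] (b ⊗ₜ[R] (x ⊗ₜ[R] y))) = (S b * x) ⊗ₜ[R] (S a * y) := by
      intro a b x y
      simp [hW, hμ, TensorProduct.assoc_symm_tmul, TensorProduct.map_tmul,
        TensorProduct.comm_tmul, TensorProduct.tensorTensorTensorComm_tmul,
        LinearMap.mul'_apply]
    have W_mul : ∀ (a b : H) (vv : H ⊗[R] H),
        (S b ⊗ₜ[R] S a) * vv = W (a ⊗ₜ[R] (b ⊗ₜ[R] vv)) := by
      intro a b vv
      induction vv with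
      | zero => rw [TensorProduct.tmul_zero, TensorProduct.tmul_zero, LinearMap.map_zero, mul_zero]
      | tmul x y => rw [W_tmul, Algebra.TensorProduct.tmul_mul_tmul]
      | add x y hx hy => simp only [TensorProduct.tmul_add, map_add, mul_add, hx, hy]
    set w := fun i => fun m => Coalgebra.Repr.arbitrary R ((q i).right m) with hw
    set Λ : (H ⊗[R] H) ⊗[R] H →ₗ[R] H ⊗[R] H :=
      LinearMap.mul' R (H ⊗[R] H) ∘ₗ TensorProduct.map
        ((TensorProduct.comm R H H).toLinearMap ∘ₗ TensorProduct.map S S) Δ with hΛ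
    have e1 : myconv f Δ c = Λ (Δ.rTensor H (Δ c)) := by
      rw [myconv_repr f Δ c r]
      have : Δ c = ∑ i ∈ r.index, r.left i ⊗ₜ[R] r.right i := by rw [hΔ, ← r.eq]
      rw [this, map_sum, map_sum]
      refine Finset.sum_congr rfl fun i _ => ?_
      simp only [LinearMap.rTensor_tmul, hΛ, hf, LinearMap.comp_apply,
        TensorProduct.map_tmul, LinearMap.mul'_apply, LinearMap.id_coe, id_eq]
    have e2 : (Δ.rTensor H) (Δ c) = ∑ i ∈ r.index, ∑ m ∈ (q i).index,
        (r.left i ⊗ₜ[R] (q i).left m) ⊗ₜ[R] (q i).right m := by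
      have e3 := Coalgebra.coassoc_symm_apply (R := R) c
      rw [hΔ, ← e3]
      have : Coalgebra.comul.lTensor H (Coalgebra.comul (R := R) c) =
          ∑ i ∈ r.index, ∑ m ∈ (q i).index,
            r.left i ⊗ₜ[R] ((q i).left m ⊗ₜ[R] (q i).right m) := by
        rw [← r.eq, map_sum]
        refine Finset.sum_congr rfl fun i _ => ?_
        rw [LinearMap.lTensor_tmul, ← (q i).eq, TensorProduct.tmul_sum]
      rw [this, map_sum]
      refine Finset.sum_congr rfl fun i _ => ?_
      rw [map_sum]
      exact Finset.sum_congr rfl fun m _ => TensorProduct.assoc_symm_tmul _ _ _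
    have step1 : myconv f Δ c = ∑ i ∈ r.index, ∑ m ∈ (q i).index,
        (S ((q i).left m) ⊗ₜ[R] S (r.left i)) * Δ ((q i).right m) := by
      rw [e1, e2, map_sum]
      refine Finset.sum_congr rfl fun i _ => ?_
      rw [map_sum]
      refine Finset.sum_congr rfl fun m _ => ?_
      simp only [hΛ, LinearMap.comp_apply, TensorProduct.map_tmul, LinearEquiv.coe_coe,
        TensorProduct.comm_tmul, LinearMap.mul'_apply]
    have step2 : myconv f Δ c = ∑ i ∈ r.index,
        W (r.left i ⊗ₜ[R] (∑ m ∈ (q i).index, (q i).left m ⊗ₜ[R] Δ ((q i).right m))) := by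
      rw [step1]
      refine Finset.sum_congr rfl fun i _ => ?_
      rw [TensorProduct.tmul_sum, map_sum]
      exact Finset.sum_congr rfl fun m _ => W_mul _ _ _
    have step3 : ∀ i, ∑ m ∈ (q i).index, (q i).left m ⊗ₜ[R] Δ ((q i).right m) =
        ∑ m ∈ (q i).index, ∑ j ∈ (v i m).index,
          (v i m).left j ⊗ₜ[R] ((v i m).right j ⊗ₜ[R] (q i).right m) := by
      intro i
      calc ∑ m ∈ (q i).index, (q i).left m ⊗ₜ[R] Δ ((q i).right m)
          = ∑ m ∈ (q i).index, ∑ j ∈ (w i m).index,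
              (q i).left m ⊗ₜ[R] ((w i m).left j ⊗ₜ[R] (w i m).right j) := by
            refine Finset.sum_congr rfl fun m _ => ?_
            rw [hΔ, ← (w i m).eq, TensorProduct.tmul_sum]
        _ = _ := (Coalgebra.sum_tmul_tmul_eq (q i) (v i) (w i)).symm
    have step4 : myconv f Δ c = ∑ i ∈ r.index, ∑ m ∈ (q i).index, ∑ j ∈ (v i m).index,
        W ((r.left i) ⊗ₜ[R] ((v i m).left j ⊗ₜ[R] ((v i m).right j ⊗ₜ[R] (q i).right m))) := by
      rw [step2]
      refine Finset.sum_congr rfl fun i _ => ?_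
      rw [step3 i, TensorProduct.tmul_sum, map_sum]
      refine Finset.sum_congr rfl fun m _ => ?_
      rw [TensorProduct.tmul_sum, map_sum]
    have step5 : myconv f Δ c = ∑ i ∈ r.index, ∑ m ∈ (q i).index,
        Coalgebra.counit (R := R) ((q i).left m) •
          ((1 : H) ⊗ₜ[R] (S (r.left i) * (q i).right m)) := by
      rw [step4]
      refine Finset.sum_congr rfl fun i _ => Finset.sum_congr rfl fun m _ => ?_
      calc ∑ j ∈ (v i m).index,
            W ((r.left i) ⊗ₜ[R] ((v i m).left j ⊗ₜ[R] ((v i m).right j ⊗ₜ[R] (q i).right m)))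
          = ∑ j ∈ (v i m).index,
              (S ((v i m).left j) * (v i m).right j) ⊗ₜ[R] (S (r.left i) * (q i).right m) := by
            exact Finset.sum_congr rfl fun j _ => W_tmul _ _ _ _
        _ = (∑ j ∈ (v i m).index, S ((v i m).left j) * (v i m).right j) ⊗ₜ[R]
              (S (r.left i) * (q i).right m) := by rw [TensorProduct.sum_tmul]
        _ = (Coalgebra.counit (R := R) ((q i).left m) • (1 : H)) ⊗ₜ[R]
              (S (r.left i) * (q i).right m) := by
            rw [hS, sum_antipode_mul_eq_smul (v i m)]
        _ = _ := by rw [TensorProduct.smul_tmul']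
    rw [step5]
    have step6 : ∀ i, ∑ m ∈ (q i).index,
        Coalgebra.counit (R := R) ((q i).left m) •
          ((1 : H) ⊗ₜ[R] (S (r.left i) * (q i).right m)) =
        (1 : H) ⊗ₜ[R] (S (r.left i) * r.right i) := by
      intro i
      calc ∑ m ∈ (q i).index, Coalgebra.counit (R := R) ((q i).left m) •
              ((1 : H) ⊗ₜ[R] (S (r.left i) * (q i).right m))
          = ∑ m ∈ (q i).index,
              (1 : H) ⊗ₜ[R] (S (r.left i) * (Coalgebra.counit (R := R) ((q i).left m) •
                (q i).right m)) := by
            refine Finset.sum_congr rfl fun m _ => ?_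
            rw [mul_smul_comm, TensorProduct.tmul_smul]
        _ = (1 : H) ⊗ₜ[R] (S (r.left i) *
              (∑ m ∈ (q i).index, Coalgebra.counit (R := R) ((q i).left m) • (q i).right m)) := by
            rw [← TensorProduct.tmul_sum, ← Finset.mul_sum]
        _ = _ := by rw [sum_counit_smul (r.right i) (q i)]
    simp_rw [step6]
    rw [← TensorProduct.tmul_sum, hS, sum_antipode_mul_eq_smul r]
    rw [TensorProduct.tmul_smul, myunit_apply, Algebra.algebraMap_eq_smul_one,
      Algebra.TensorProduct.one_def]
  have key : f = n := myconv_inv_unique h1 h2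
  have := congrArg (fun φ : H →ₗ[R] H ⊗[R] H => φ h) key
  simp only [hf, hn, LinearMap.comp_apply, LinearEquiv.coe_coe] at this
  exact this.symm

end Hopf

section NatRepr

lemma sum_range_getD_map {α M : Type*} [AddCommMonoid M] (L : List α) (d : α) (F : α → M) :
    ∑ i ∈ Finset.range L.length, F (L.getD i d) = (L.map F).sum := by
  induction L with
  | nil => simp
  | cons a L ih =>
    rw [List.length_cons, Finset.sum_range_succ']
    simp only [List.getD_cons_succ, List.getD_cons_zero, ih, List.map_cons, List.sum_cons]
    exact add_comm _ _

lemma exists_nat_repr {R M N : Type*} [CommRing R] [AddCommGroup M] [AddCommGroup N]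
    [Module R M] [Module R N] (x : M ⊗[R] N) :
    ∃ (s : Finset ℕ) (f : ℕ → M) (g : ℕ → N), x = ∑ i ∈ s, f i ⊗ₜ[R] g i := by
  obtain ⟨T, hT⟩ := TensorProduct.exists_finset x
  set L := T.toList with hL
  refine ⟨Finset.range L.length, fun i => (L.getD i (0, 0)).1, fun i => (L.getD i (0, 0)).2, ?_⟩
  calc x = ∑ p ∈ T, p.1 ⊗ₜ[R] p.2 := hT
    _ = (L.map fun p : M × N => p.1 ⊗ₜ[R] p.2).sum := (Finset.sum_map_toList T _).symm
    _ = ∑ i ∈ Finset.range L.length, ((L.getD i (0, 0)).1 ⊗ₜ[R] (L.getD i (0, 0)).2) :=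
        (sum_range_getD_map L (0, 0) _).symm

end NatRepr

open scoped TensorProduct
open Finset

/-- if `S² = id`, the map `T((a⊗b)⊗h) = (b⊗a)⊗S(h)` is an algebra
anti-homomorphism of Kadison's algebra `A^e ◇ H` with `T² = id`. -/
theorem stmt_13 (k H A : Type) [Field k] [Ring H] [HopfAlgebra k H]
    [Ring A] [Algebra k A]
    (hinv : ∀ h : H, HopfAlgebra.antipode (R := k) (HopfAlgebra.antipode (R := k) h) = h)
    (l : H →ₗ[k] A →ₗ[k] A)
    (hl_one : ∀ a : A, l 1 a = a)
    (hl_mul : ∀ (h h' : H) (a : A), l (h * h') a = l h (l h' a))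
    (hl_unit : ∀ h : H, l h (1 : A) = Coalgebra.counit (R := k) h • (1 : A))
    (hl_meas : ∀ (h : H) (a b : A) (s : Finset ℕ) (f g : ℕ → H),
      Coalgebra.comul (R := k) h = ∑ i ∈ s, f i ⊗ₜ[k] g i →
      l h (a * b) = ∑ i ∈ s, l (f i) a * l (g i) b)
    (mulK : ((A ⊗[k] A) ⊗[k] H) →ₗ[k] ((A ⊗[k] A) ⊗[k] H) →ₗ[k] ((A ⊗[k] A) ⊗[k] H))
    (hK : ∀ (a b a' b' : A) (h h' : H) (s t : Finset ℕ) (f g f' g' : ℕ → H),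
      Coalgebra.comul (R := k) h = ∑ i ∈ s, f i ⊗ₜ[k] g i →
      Coalgebra.comul (R := k) h' = ∑ j ∈ t, f' j ⊗ₜ[k] g' j →
      mulK ((a ⊗ₜ[k] b) ⊗ₜ[k] h) ((a' ⊗ₜ[k] b') ⊗ₜ[k] h') =
        ∑ i ∈ s, ∑ j ∈ t,
          ((a * l (f i) a') ⊗ₜ[k] (b' * l (HopfAlgebra.antipode (R := k) (g' j)) b)) ⊗ₜ[k] (g i * f' j))
    (T : ((A ⊗[k] A) ⊗[k] H) →ₗ[k] ((A ⊗[k] A) ⊗[k] H))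
    (hT : ∀ (a b : A) (h : H),
      T ((a ⊗ₜ[k] b) ⊗ₜ[k] h) = (b ⊗ₜ[k] a) ⊗ₜ[k] HopfAlgebra.antipode (R := k) h) :
    (∀ x y : (A ⊗[k] A) ⊗[k] H, T (mulK x y) = mulK (T y) (T x)) ∧
    T (((1 : A) ⊗ₜ[k] (1 : A)) ⊗ₜ[k] (1 : H)) = ((1 : A) ⊗ₜ[k] (1 : A)) ⊗ₜ[k] (1 : H) ∧
    (∀ x : (A ⊗[k] A) ⊗[k] H, T (T x) = x) := by
  have hmain : ∀ (a b a' b' : A) (h h' : H),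
      T (mulK ((a ⊗ₜ[k] b) ⊗ₜ[k] h) ((a' ⊗ₜ[k] b') ⊗ₜ[k] h')) =
        mulK (T ((a' ⊗ₜ[k] b') ⊗ₜ[k] h')) (T ((a ⊗ₜ[k] b) ⊗ₜ[k] h)) := by
    intro a b a' b' h h'
    obtain ⟨s, f, g, hs⟩ := exists_nat_repr (Coalgebra.comul (R := k) h)
    obtain ⟨t, f', g', ht⟩ := exists_nat_repr (Coalgebra.comul (R := k) h')
    have hsS : Coalgebra.comul (R := k) (HopfAlgebra.antipode (R := k) h) =
        ∑ i ∈ s, (HopfAlgebra.antipode (R := k) (g i)) ⊗ₜ[k]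
          (HopfAlgebra.antipode (R := k) (f i)) := by
      rw [my_comul_antipode, hs, map_sum, map_sum]
      simp [TensorProduct.map_tmul, TensorProduct.comm_tmul]
    have htS : Coalgebra.comul (R := k) (HopfAlgebra.antipode (R := k) h') =
        ∑ j ∈ t, (HopfAlgebra.antipode (R := k) (g' j)) ⊗ₜ[k]
          (HopfAlgebra.antipode (R := k) (f' j)) := by
      rw [my_comul_antipode, ht, map_sum, map_sum]
      simp [TensorProduct.map_tmul, TensorProduct.comm_tmul]
    rw [hK a b a' b' h h' s t f g f' g' hs ht, hT a b h, hT a' b' h',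
      hK b' a' b a (HopfAlgebra.antipode (R := k) h') (HopfAlgebra.antipode (R := k) h) t s
        (fun j => HopfAlgebra.antipode (R := k) (g' j))
        (fun j => HopfAlgebra.antipode (R := k) (f' j))
        (fun i => HopfAlgebra.antipode (R := k) (g i))
        (fun i => HopfAlgebra.antipode (R := k) (f i)) htS hsS,
      map_sum]
    rw [Finset.sum_comm]
    refine Finset.sum_congr rfl fun j _ => ?_
    rw [map_sum]
    refine Finset.sum_congr rfl fun i _ => ?_
    rw [hT, hinv, my_antipode_mul]
  have hTzero : T 0 = 0 := map_zero T
  refine ⟨?_, ?_, ?_⟩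
  · -- anti-homomorphism
    have hpure : ∀ (z w : A ⊗[k] A) (h h' : H),
        T (mulK (z ⊗ₜ[k] h) (w ⊗ₜ[k] h')) = mulK (T (w ⊗ₜ[k] h')) (T (z ⊗ₜ[k] h)) := by
      intro z w h h'
      induction z with
      | zero => simp
      | tmul a b =>
        induction w with
        | zero => simp
        | tmul a' b' => exact hmain a b a' b' h h'
        | add w₁ w₂ hw₁ hw₂ =>
          simp only [TensorProduct.add_tmul, map_add, LinearMap.add_apply, LinearMap.map_add,
            hw₁, hw₂]
      | add z₁ z₂ hz₁ hz₂ =>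
        simp only [TensorProduct.add_tmul, map_add, LinearMap.add_apply, LinearMap.map_add,
          hz₁, hz₂]
    intro x y
    induction x with
    | zero => simp
    | tmul z h =>
      induction y with
      | zero => simp
      | tmul w h' => exact hpure z w h h'
      | add y₁ y₂ hy₁ hy₂ =>
        simp only [map_add, LinearMap.add_apply, LinearMap.map_add, hy₁, hy₂]
    | add x₁ x₂ hx₁ hx₂ =>
      simp only [map_add, LinearMap.add_apply, LinearMap.map_add, hx₁, hx₂]
  · rw [hT, my_antipode_one]
  · -- involution
    intro x
    induction x with
    | zero => simp
    | tmul z h =>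
      induction z with
      | zero => simp [TensorProduct.zero_tmul]
      | tmul a b => rw [hT, hT, hinv]
      | add z₁ z₂ hz₁ hz₂ =>
        simp only [TensorProduct.add_tmul, map_add, hz₁, hz₂]
    | add x₁ x₂ hx₁ hx₂ => simp only [map_add, hx₁, hx₂]
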